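/- Geometric pooling minimizes the total reverse KL-divergence: for strictly positive probability vectors P_1, …, P_N on a nonempty finite set A, the vector q*(a) = (Π_{i=1}^N P_i(a))^{1/N} / Σ_{a'∈A} (Π_{i=1}^N P_i(a'))^{1/N} satisfies, for every strictly positive probability vector q on A, Σ_{i=1}^N KL(q*, P_i) ≤ Σ_{i=1}^N KL(q, P_i). -/

import Mathlib

open Finset

/-- A strictly positive probability vector on a finite set. -/
def IsPosProbVec {A : Type*} [Fintype A] (q : A → ℝ) : Prop :=
  (∀ a, 0 < q a) ∧ ∑ a, q a = 1

/-- KL-divergence between strictly positive probability vectors. -/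
noncomputable def KL {A : Type*} [Fintype A] (p q : A → ℝ) : ℝ :=
  ∑ a, p a * Real.log (p a / q a)

lemma gibbs {A : Type*} [Fintype A] {p q : A → ℝ} (hp : IsPosProbVec p)
    (hq : IsPosProbVec q) : 0 ≤ KL p q := by
  have h : ∀ a : A, p a - q a ≤ p a * Real.log (p a / q a) := by
    intro a
    have hpa := hp.1 a; have hqa := hq.1 a
    have hx : 0 < q a / p a := by positivity
    have h1 := Real.log_le_sub_one_of_pos hx
    have hlog : Real.log (p a / q a) = - Real.log (q a / p a) := by
      rw [← Real.log_inv]; congr 1; field_simp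
    have h2 : p a * Real.log (q a / p a) ≤ p a * (q a / p a - 1) :=
      mul_le_mul_of_nonneg_left h1 hpa.le
    have h3 : p a * (q a / p a - 1) = q a - p a := by field_simp
    rw [hlog, mul_neg]
    linarith
  calc (0:ℝ) = ∑ a, (p a - q a) := by
        rw [Finset.sum_sub_distrib, hp.2, hq.2]; ring
    _ ≤ ∑ a, p a * Real.log (p a / q a) := Finset.sum_le_sum (fun a _ => h a)
    _ = KL p q := rfl

/-- Geometric pooling minimizes the total reverse KL-divergence. -/
theorem stmt3 {A : Type*} [Fintype A] [Nonempty A] (N : ℕ) (hN : 1 ≤ N)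
    (P : Fin N → A → ℝ) (hP : ∀ i, IsPosProbVec (P i))
    (qstar : A → ℝ)
    (hqstar : ∀ a, qstar a =
      (∏ i, P i a) ^ ((1 : ℝ) / N) / ∑ a', (∏ i, P i a') ^ ((1 : ℝ) / N)) :
    ∀ q : A → ℝ, IsPosProbVec q →
      ∑ i, KL qstar (P i) ≤ ∑ i, KL q (P i) := by
  intro q hq
  have hNpos : (0:ℝ) < (N:ℝ) := by exact_mod_cast hN
  have hN0 : (N:ℝ) ≠ 0 := hNpos.ne'
  have hprodpos : ∀ a : A, 0 < ∏ i, P i a :=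
    fun a => Finset.prod_pos fun i _ => (hP i).1 a
  have hGpos : ∀ a : A, 0 < (∏ i, P i a) ^ ((1:ℝ)/N) :=
    fun a => Real.rpow_pos_of_pos (hprodpos a) _
  set S : ℝ := ∑ a', (∏ i, P i a') ^ ((1:ℝ)/N) with hS
  have hSpos : 0 < S := Finset.sum_pos (fun a _ => hGpos a) Finset.univ_nonempty
  have hqstar_pos : ∀ a, 0 < qstar a := fun a => by
    rw [hqstar a]; exact div_pos (hGpos a) hSpos
  have hqstar_sum : ∑ a, qstar a = 1 := by
    have : ∑ a, qstar a = (∑ a, (∏ i, P i a) ^ ((1:ℝ)/N)) / S := by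
      rw [Finset.sum_div]; exact Finset.sum_congr rfl fun a _ => hqstar a
    rw [this, ← hS, div_self hSpos.ne']
  have hlogq : ∀ a, Real.log (qstar a)
      = (1/N : ℝ) * ∑ i, Real.log (P i a) - Real.log S := by
    intro a
    rw [hqstar a, Real.log_div (hGpos a).ne' hSpos.ne', Real.log_rpow (hprodpos a),
      Real.log_prod (fun i _ => ((hP i).1 a).ne')]
  have key : ∀ p : A → ℝ, (∀ a, 0 < p a) → ∑ a, p a = 1 →
      ∑ i, KL p (P i) = (N:ℝ) * KL p qstar - N * Real.log S := by
    intro p hp1 hp2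
    have lhs : ∑ i, KL p (P i)
        = ∑ a, p a * ((N:ℝ) * Real.log (p a) - ∑ i, Real.log (P i a)) := by
      unfold KL
      rw [Finset.sum_comm]
      refine Finset.sum_congr rfl fun a _ => ?_
      rw [← Finset.mul_sum]
      congr 1
      rw [Finset.sum_congr rfl fun i _ => Real.log_div (hp1 a).ne' ((hP i).1 a).ne',
        Finset.sum_sub_distrib, Finset.sum_const, Finset.card_univ, Fintype.card_fin,
        nsmul_eq_mul]
    rw [lhs]
    unfold KL
    have hpt : ∀ a, Real.log (p a / qstar a)
        = Real.log (p a) - ((1/N : ℝ) * ∑ i, Real.log (P i a) - Real.log S) := by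
      intro a; rw [Real.log_div (hp1 a).ne' (hqstar_pos a).ne', hlogq a]
    simp only [hpt]
    rw [Finset.mul_sum]
    have hsub : (N:ℝ) * Real.log S = ∑ a, (N:ℝ) * Real.log S * p a := by
      rw [← Finset.mul_sum, hp2, mul_one]
    rw [hsub, ← Finset.sum_sub_distrib]
    refine Finset.sum_congr rfl fun a _ => ?_
    field_simp
    ring
  rw [key qstar hqstar_pos hqstar_sum, key q hq.1 hq.2]
  have h0 : KL qstar qstar = 0 := by
    unfold KL
    refine Finset.sum_eq_zero fun a _ => ?_
    rw [div_self (hqstar_pos a).ne', Real.log_one, mul_zero]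
  rw [h0, mul_zero]
  have hkl := gibbs hq ⟨hqstar_pos, hqstar_sum⟩
  have := mul_nonneg hNpos.le hkl
  linarith [this]
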